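/- arXiv:2004.04188 — 4 statements merged into one kernel-verified Lean document; each statement's English description precedes it below -/
import Mathlib

section
/- Let n ≥ 1, let I = {0,1,…,n} be a node set with depot 0 and collection nodes IC = {1,…,n}, let d : I × I → ℝ be nonnegative and satisfy the triangle inequality d(u,w) ≤ d(u,v) + d(v,w) for all u,v,w ∈ I, and let Q > 0 be a real capacity. Let a route be a finite sequence v_0 = 0, v_1, …, v_m, v_{m+1} = 0 with m ≥ 1 and v_1,…,v_m pairwise distinct elements of IC, and let its length be len = Σ_{k=0}^{m} d(v_k, v_{k+1}). If w_1,…,w_m are nonnegative real loads with Σ_{k=1}^{m} w_k ≤ Q, then len ≥ (1/Q) · Σ_{k=1}^{m} (d(0,v_k) + d(v_k,0)) · w_k + (min_{i∈IC} d(0,i) + min_{i∈IC} d(i,0)) · (Q − Σ_{k=1}^{m} w_k)/Q. -/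
/-- The set of collection nodes `IC = {1,…,n}`, i.e. all nodes except the depot `0`. -/
def ICset (n : ℕ) : Finset (Fin (n + 1)) := Finset.univ.erase 0

theorem ICset_nonempty (n : ℕ) (hn : 1 ≤ n) : (ICset n).Nonempty :=
  ⟨⟨1, by omega⟩, by simp [ICset, Fin.ext_iff]⟩

/-- `min_{i ∈ IC} d(0,i)`. -/
def minToIC (n : ℕ) (hn : 1 ≤ n) (d : Fin (n + 1) → Fin (n + 1) → ℝ) : ℝ :=
  (ICset n).inf' (ICset_nonempty n hn) fun i => d 0 i

/-- `min_{i ∈ IC} d(i,0)`. -/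
def minFromIC (n : ℕ) (hn : 1 ≤ n) (d : Fin (n + 1) → Fin (n + 1) → ℝ) : ℝ :=
  (ICset n).inf' (ICset_nonempty n hn) fun i => d i 0

/-- per-route justification of the routing lower bound used in the
relaxation without routing (IRR) of the SPIRP. -/
theorem stmt_0 (n m : ℕ) (hn : 1 ≤ n) (hm : 1 ≤ m)
    (d : Fin (n + 1) → Fin (n + 1) → ℝ)
    (hd_nonneg : ∀ u v, 0 ≤ d u v)
    (hd_tri : ∀ u v w, d u w ≤ d u v + d v w)
    (Q : ℝ) (hQ : 0 < Q)
    (v : ℕ → Fin (n + 1))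
    (hv_start : v 0 = 0) (hv_end : v (m + 1) = 0)
    (hv_IC : ∀ k, 1 ≤ k → k ≤ m → v k ≠ 0)
    (hv_inj : ∀ k l, 1 ≤ k → k ≤ m → 1 ≤ l → l ≤ m → v k = v l → k = l)
    (w : ℕ → ℝ) (hw_nonneg : ∀ k, 1 ≤ k → k ≤ m → 0 ≤ w k)
    (hcap : ∑ k ∈ Finset.Icc 1 m, w k ≤ Q) :
    (1 / Q) * (∑ k ∈ Finset.Icc 1 m, (d 0 (v k) + d (v k) 0) * w k)
      + (minToIC n hn d + minFromIC n hn d)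
          * ((Q - ∑ k ∈ Finset.Icc 1 m, w k) / Q)
      ≤ ∑ k ∈ Finset.range (m + 1), d (v k) (v (k + 1)) := by
  set L := ∑ k ∈ Finset.range (m + 1), d (v k) (v (k + 1)) with hLdef
  have path_bound : ∀ b a, a < b →
      d (v a) (v b) ≤ ∑ j ∈ Finset.Ico a b, d (v j) (v (j + 1)) := by
    intro b
    induction b with
    | zero => intro a h; omega
    | succ b ih =>
      intro a hab
      rcases eq_or_lt_of_le (Nat.lt_succ_iff.mp hab) with h | h
      · subst h; simp
      · rw [Finset.sum_Ico_succ_top (le_of_lt h)]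
        calc d (v a) (v (b + 1)) ≤ d (v a) (v b) + d (v b) (v (b + 1)) :=
              hd_tri _ _ _
          _ ≤ _ := by linarith [ih a h]
  have hL_nonneg : 0 ≤ L := Finset.sum_nonneg fun i _ => hd_nonneg _ _
  have hkey : ∀ k, 1 ≤ k → k ≤ m → d 0 (v k) + d (v k) 0 ≤ L := by
    intro k hk1 hkm
    have h1 := path_bound k 0 (by omega)
    have h2 := path_bound (m + 1) k (by omega)
    rw [hv_start] at h1
    rw [hv_end] at h2
    have hsplit : (∑ j ∈ Finset.Ico 0 k, d (v j) (v (j + 1)))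
        + ∑ j ∈ Finset.Ico k (m + 1), d (v j) (v (j + 1)) = L := by
      rw [Finset.sum_Ico_consecutive _ (Nat.zero_le k) (by omega), hLdef,
        Finset.range_eq_Ico]
    linarith
  have hv1 : v 1 ∈ ICset n :=
    Finset.mem_erase.mpr ⟨hv_IC 1 le_rfl hm, Finset.mem_univ _⟩
  have hmin : minToIC n hn d + minFromIC n hn d ≤ L := by
    have h1 : minToIC n hn d ≤ d 0 (v 1) := Finset.inf'_le _ hv1
    have h2 : minFromIC n hn d ≤ d (v 1) 0 := Finset.inf'_le _ hv1
    have := hkey 1 le_rfl hm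
    linarith
  have hW_nonneg : 0 ≤ ∑ k ∈ Finset.Icc 1 m, w k :=
    Finset.sum_nonneg fun i hi => by
      rw [Finset.mem_Icc] at hi; exact hw_nonneg i hi.1 hi.2
  set W := ∑ k ∈ Finset.Icc 1 m, w k with hWdef
  have hsum : ∑ k ∈ Finset.Icc 1 m, (d 0 (v k) + d (v k) 0) * w k ≤ L * W := by
    rw [hWdef, Finset.mul_sum]
    refine Finset.sum_le_sum fun i hi => ?_
    rw [Finset.mem_Icc] at hi
    exact mul_le_mul_of_nonneg_right (hkey i hi.1 hi.2) (hw_nonneg i hi.1 hi.2)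
  have hfrac : (0:ℝ) ≤ (Q - W) / Q := div_nonneg (by linarith) hQ.le
  have h2 : (minToIC n hn d + minFromIC n hn d) * ((Q - W) / Q)
      ≤ L * ((Q - W) / Q) := mul_le_mul_of_nonneg_right hmin hfrac
  have h1 : (1 / Q) * (∑ k ∈ Finset.Icc 1 m, (d 0 (v k) + d (v k) 0) * w k)
      ≤ (1 / Q) * (L * W) :=
    mul_le_mul_of_nonneg_left hsum (by positivity)
  have heq : (1 / Q) * (L * W) + L * ((Q - W) / Q) = L := by
    field_simp
    ring
  linarith
end

section
/- Let n ≥ 1, let I = {0,1,…,n} be a node set with depot 0 and collection nodes IC = {1,…,n}, let d : I × I → ℝ be nonnegative and satisfy the triangle inequality d(u,w) ≤ d(u,v) + d(v,w) for all u,v,w ∈ I, let Q > 0 be a real capacity, and let w : IC → ℝ be nonnegative loads. Suppose k ≥ 1 routes are given (each a sequence 0, v_1, …, v_m, 0 with m ≥ 1 and internal nodes in IC), whose internal node sets S_1, …, S_k ⊆ IC are pairwise disjoint, and suppose each route satisfies the capacity constraint Σ_{i∈S_j} w_i ≤ Q. Let S = S_1 ∪ … ∪ S_k. Then the total length of the k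 routes is at least (1/Q) · Σ_{i∈S} (d(0,i) + d(i,0)) · w_i + (min_{i∈IC} d(0,i) + min_{i∈IC} d(i,0)) · (k − (Σ_{i∈S} w_i)/Q). -/
/-- fleet-level routing lower bound used in the relaxation without
routing (IRR) of the SPIRP. -/
theorem stmt_1 (n K : ℕ) (hn : 1 ≤ n) (hK : 1 ≤ K)
    (d : Fin (n + 1) → Fin (n + 1) → ℝ)
    (hd_nonneg : ∀ u v, 0 ≤ d u v)
    (hd_tri : ∀ u v w, d u w ≤ d u v + d v w)
    (Q : ℝ) (hQ : 0 < Q)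
    (w : Fin (n + 1) → ℝ) (hw_nonneg : ∀ i, i ≠ 0 → 0 ≤ w i)
    (m : Fin K → ℕ) (hm : ∀ j, 1 ≤ m j)
    (v : Fin K → ℕ → Fin (n + 1))
    (hv_start : ∀ j, v j 0 = 0) (hv_end : ∀ j, v j (m j + 1) = 0)
    (hv_IC : ∀ j k, 1 ≤ k → k ≤ m j → v j k ≠ 0)
    (hv_inj : ∀ j k l, 1 ≤ k → k ≤ m j → 1 ≤ l → l ≤ m j → v j k = v j l → k = l)
    (S : Fin K → Finset (Fin (n + 1)))
    (hS : ∀ j, S j = (Finset.Icc 1 (m j)).image (v j))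
    (hdisj : ∀ j j', j ≠ j' → Disjoint (S j) (S j'))
    (hcap : ∀ j, ∑ i ∈ S j, w i ≤ Q) :
    (1 / Q) * (∑ i ∈ Finset.univ.biUnion S, (d 0 i + d i 0) * w i)
      + (minToIC n hn d + minFromIC n hn d)
          * ((K : ℝ) - (∑ i ∈ Finset.univ.biUnion S, w i) / Q)
      ≤ ∑ j, ∑ k ∈ Finset.range (m j + 1), d (v j k) (v j (k + 1)) := by
  set c := minToIC n hn d + minFromIC n hn d with hc
  set L := fun j => ∑ k ∈ Finset.range (m j + 1), d (v j k) (v j (k + 1)) with hL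
  -- path lower bound
  have hpath : ∀ (f : ℕ → Fin (n + 1)) (a b : ℕ), a + 1 ≤ b →
      d (f a) (f b) ≤ ∑ t ∈ Finset.Ico a b, d (f t) (f (t + 1)) := by
    intro f a b hab
    induction b, hab using Nat.le_induction with
    | base => simp
    | succ b hb ih =>
      rw [Finset.sum_Ico_succ_top (by omega)]
      calc d (f a) (f (b + 1)) ≤ d (f a) (f b) + d (f b) (f (b + 1)) := hd_tri _ _ _
        _ ≤ _ := by linarith
  -- per node on route j, out-and-back bound
  have hLi : ∀ j i, i ∈ S j → d 0 i + d i 0 ≤ L j := by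
    intro j i hi
    rw [hS j] at hi
    obtain ⟨k, hk, rfl⟩ := Finset.mem_image.mp hi
    simp only [Finset.mem_Icc] at hk
    have hsplit : L j = (∑ t ∈ Finset.Ico 0 k, d (v j t) (v j (t + 1)))
        + ∑ t ∈ Finset.Ico k (m j + 1), d (v j t) (v j (t + 1)) := by
      rw [hL]; beta_reduce; rw [Finset.range_eq_Ico, Finset.sum_Ico_consecutive]
      · omega
      · omega
    have h1 : d (v j 0) (v j k) ≤ ∑ t ∈ Finset.Ico 0 k, d (v j t) (v j (t + 1)) :=
      hpath _ 0 k (by omega)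
    have h2 : d (v j k) (v j (m j + 1)) ≤ ∑ t ∈ Finset.Ico k (m j + 1), d (v j t) (v j (t + 1)) :=
      hpath _ k (m j + 1) (by omega)
    rw [hv_start j] at h1
    rw [hv_end j] at h2
    linarith [hsplit.ge]
  have hv1S : ∀ j, v j 1 ∈ S j := by
    intro j
    rw [hS j]
    exact Finset.mem_image.mpr ⟨1, by simp [Finset.mem_Icc, hm j], rfl⟩
  have hLc : ∀ j, c ≤ L j := by
    intro j
    have hmem : v j 1 ∈ ICset n := by
      simp [ICset, hv_IC j 1 le_rfl (hm j)]
    have h1 : minToIC n hn d ≤ d 0 (v j 1) := Finset.inf'_le _ hmem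
    have h2 : minFromIC n hn d ≤ d (v j 1) 0 := Finset.inf'_le _ hmem
    have := hLi j (v j 1) (hv1S j)
    linarith
  have hiS0 : ∀ j i, i ∈ S j → i ≠ 0 := by
    intro j i hi
    rw [hS j] at hi
    obtain ⟨k, hk, rfl⟩ := Finset.mem_image.mp hi
    simp only [Finset.mem_Icc] at hk
    exact hv_IC j k hk.1 hk.2
  have hWnn : ∀ j, 0 ≤ ∑ i ∈ S j, w i := fun j =>
    Finset.sum_nonneg fun i hi => hw_nonneg i (hiS0 j i hi)
  have hPD : Set.PairwiseDisjoint (↑(Finset.univ : Finset (Fin K)) : Set (Fin K)) S :=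
    fun j _ j' _ h => hdisj j j' h
  rw [Finset.sum_biUnion hPD, Finset.sum_biUnion hPD]
  have hKsum : (K : ℝ) = ∑ _j : Fin K, (1 : ℝ) := by simp
  rw [hKsum]
  have hlhs : (1 / Q) * (∑ j, ∑ i ∈ S j, (d 0 i + d i 0) * w i)
      + c * ((∑ _j : Fin K, (1 : ℝ)) - (∑ j, ∑ i ∈ S j, w i) / Q)
      = ∑ j, ((1 / Q) * (∑ i ∈ S j, (d 0 i + d i 0) * w i)
          + c * (1 - (∑ i ∈ S j, w i) / Q)) := by
    rw [Finset.mul_sum]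
    rw [Finset.sum_add_distrib]
    congr 1
    rw [← Finset.mul_sum]
    congr 1
    rw [Finset.sum_sub_distrib, Finset.sum_div]
  rw [hlhs]
  apply Finset.sum_le_sum
  intro j _
  set W := ∑ i ∈ S j, w i with hW
  have hA : ∑ i ∈ S j, (d 0 i + d i 0) * w i ≤ W * L j := by
    rw [hW, Finset.sum_mul]
    apply Finset.sum_le_sum
    intro i hi
    rw [mul_comm (w i)]
    exact mul_le_mul_of_nonneg_right (hLi j i hi) (hw_nonneg i (hiS0 j i hi))
  have hcapj := hcap j
  have hWQ : 0 ≤ 1 - W / Q := by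
    rw [sub_nonneg, div_le_one hQ]; exact hcapj
  have h1 : (1 / Q) * (∑ i ∈ S j, (d 0 i + d i 0) * w i) ≤ (1 / Q) * (W * L j) :=
    mul_le_mul_of_nonneg_left hA (by positivity)
  have h2 : c * (1 - W / Q) ≤ L j * (1 - W / Q) :=
    mul_le_mul_of_nonneg_right (hLc j) hWQ
  have heq : (1 / Q) * (W * L j) + L j * (1 - W / Q) = L j := by
    field_simp; ring
  linarith
end

section
/- Let n ≥ 1, I = {0,1,…,n} with depot 0 and IC = {1,…,n}; let d : I × I → ℝ be nonnegative and satisfy the triangle inequality; let Q > 0, c ≥ 0, v ≥ 0. Suppose X : {(i,j) ∈ I × I : i ≠ j} → {0,1}, Y : IC → {0,1}, F : {(i,j) ∈ I × I : i ≠ j} → ℝ nonnegative, and W : IC → ℝ nonnegative satisfy: (i) Σ_{j≠i} F(i,j) − Σ_{j≠i} F(j,i) = W(i) for every i ∈ IC; (ii) F(i,j) ≤ Q·X(i,j) for all i ≠ j; (iii) Σ_{j≠i} X(j,i) = Y(i) and Σ_{j≠i} X(i,j) = Y(i) for every i ∈ IC; and (iv) Σ_{i∈IC} X(i,0) = Σ_{i∈IC}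 X(0,i). Let Wtot = Σ_{i∈IC} W(i), k* = ⌈Wtot/Q⌉ and R = k* − Wtot/Q. Then c·Σ_{i≠j} d(i,j)·X(i,j) + v·Σ_{i∈IC} X(0,i) ≥ c·[(1/Q)·Σ_{i∈IC} (d(0,i) + d(i,0))·W(i) + (min_{i∈IC} d(0,i) + min_{i∈IC} d(i,0))·R] + v·k*. -/
lemma sum_swap_ne {N : ℕ} (f : Fin N → Fin N → ℝ) :
    ∑ i, ∑ j ∈ Finset.univ.filter (fun j => j ≠ i), f i j
      = ∑ j, ∑ i ∈ Finset.univ.filter (fun i => i ≠ j), f i j := by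
  simp only [Finset.sum_filter]
  rw [Finset.sum_comm]
  refine Finset.sum_congr rfl fun j _ => Finset.sum_congr rfl fun i _ => ?_
  exact if_congr ne_comm rfl rfl

lemma div_identity {N : ℕ} (p : Fin N → ℝ) (f : Fin N → Fin N → ℝ) :
    ∑ i, ∑ j ∈ Finset.univ.filter (fun j => j ≠ i), (p i - p j) * f i j
      = ∑ v, p v * ((∑ j ∈ Finset.univ.filter (fun j => j ≠ v), f v j)
          - (∑ j ∈ Finset.univ.filter (fun j => j ≠ v), f j v)) := by
  have h1 : ∑ i, ∑ j ∈ Finset.univ.filter (fun j => j ≠ i), p j * f i j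
      = ∑ v, p v * ∑ j ∈ Finset.univ.filter (fun j => j ≠ v), f j v := by
    rw [sum_swap_ne (fun i j => p j * f i j)]
    simp [Finset.mul_sum]
  simp only [sub_mul, Finset.sum_sub_distrib, mul_sub, Finset.mul_sum, h1]

lemma sum_int_of_binary {N : ℕ} (g : Fin N → ℝ) (s : Finset (Fin N))
    (h : ∀ i ∈ s, g i = 0 ∨ g i = 1) : ∃ z : ℤ, ∑ i ∈ s, g i = (z : ℝ) := by
  classical
  induction s using Finset.cons_induction with
  | empty => exact ⟨0, by simp⟩
  | cons a s ha ih =>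
    obtain ⟨z, hz⟩ := ih (fun i hi => h i (Finset.mem_cons_of_mem hi))
    rcases h a (Finset.mem_cons_self a s) with h0 | h1
    · exact ⟨z, by rw [Finset.sum_cons, h0, hz]; simp⟩
    · exact ⟨z + 1, by rw [Finset.sum_cons, h1, hz]; push_cast; ring⟩

/-- single-period validity of the relaxation without routing (IRR):
the period travel-plus-vehicle cost of any feasible period routing of formulation IR
is at least the corresponding term of the IRR objective with `V = ⌈Wtot/Q⌉` vehicles
and slack `R = ⌈Wtot/Q⌉ − Wtot/Q`. -/
theorem stmt_7 (n : ℕ) (hn : 1 ≤ n)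
    (d : Fin (n + 1) → Fin (n + 1) → ℝ)
    (hd_nonneg : ∀ u v, 0 ≤ d u v)
    (hd_tri : ∀ u v w, d u w ≤ d u v + d v w)
    (Q c vcost : ℝ) (hQ : 0 < Q) (hc : 0 ≤ c) (hvcost : 0 ≤ vcost)
    (X : Fin (n + 1) → Fin (n + 1) → ℝ)
    (hX_bin : ∀ i j, i ≠ j → X i j = 0 ∨ X i j = 1)
    (Y : Fin (n + 1) → ℝ)
    (hY_bin : ∀ i, i ≠ 0 → Y i = 0 ∨ Y i = 1)
    (F : Fin (n + 1) → Fin (n + 1) → ℝ)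
    (hF_nonneg : ∀ i j, i ≠ j → 0 ≤ F i j)
    (W : Fin (n + 1) → ℝ)
    (hW_nonneg : ∀ i, i ≠ 0 → 0 ≤ W i)
    -- (i) flow conservation at every collection node
    (hflow : ∀ i, i ≠ 0 →
      (∑ j ∈ Finset.univ.filter (fun j => j ≠ i), F i j)
        - (∑ j ∈ Finset.univ.filter (fun j => j ≠ i), F j i) = W i)
    -- (ii) arc flow capacities
    (hFcap : ∀ i j, i ≠ j → F i j ≤ Q * X i j)
    -- (iii) unit in- and out-degree at every visited node
    (hdeg_in : ∀ i, i ≠ 0 →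
      (∑ j ∈ Finset.univ.filter (fun j => j ≠ i), X j i) = Y i)
    (hdeg_out : ∀ i, i ≠ 0 →
      (∑ j ∈ Finset.univ.filter (fun j => j ≠ i), X i j) = Y i)
    -- (iv) depot vehicle balance
    (hdepot : ∑ i ∈ ICset n, X i 0 = ∑ i ∈ ICset n, X 0 i) :
    c * ((1 / Q) * (∑ i ∈ ICset n, (d 0 i + d i 0) * W i)
          + (minToIC n hn d + minFromIC n hn d)
              * ((⌈(∑ i ∈ ICset n, W i) / Q⌉ : ℝ) - (∑ i ∈ ICset n, W i) / Q))
      + vcost * (⌈(∑ i ∈ ICset n, W i) / Q⌉ : ℝ)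
    ≤ c * (∑ i, ∑ j ∈ Finset.univ.filter (fun j => j ≠ i), d i j * X i j)
      + vcost * (∑ i ∈ ICset n, X 0 i) := by
  classical
  set m0 : ℝ := minToIC n hn d with hm0def
  set m1 : ℝ := minFromIC n hn d with hm1def
  set Wtot : ℝ := ∑ i ∈ ICset n, W i with hWtotdef
  set V : ℝ := ∑ i ∈ ICset n, X 0 i with hVdef
  set S : ℝ := ∑ i ∈ ICset n, (d 0 i + d i 0) * W i with hSdef
  set T : ℝ := ∑ i, ∑ j ∈ Finset.univ.filter (fun j => j ≠ i), d i j * X i j with hTdef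
  have hfe : Finset.univ.filter (fun j => j ≠ (0 : Fin (n + 1))) = ICset n := by
    rw [ICset]; exact Finset.filter_ne' _ _
  have hmemIC : ∀ i : Fin (n + 1), i ≠ 0 → i ∈ ICset n := by
    intro i hi; simp [ICset, hi]
  have hm0le : ∀ j : Fin (n + 1), j ≠ 0 → m0 ≤ d 0 j := fun j hj =>
    Finset.inf'_le _ (hmemIC j hj)
  have hm1le : ∀ j : Fin (n + 1), j ≠ 0 → m1 ≤ d j 0 := fun j hj =>
    Finset.inf'_le _ (hmemIC j hj)
  have hm0nn : 0 ≤ m0 := Finset.le_inf' _ _ fun b _ => hd_nonneg 0 b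
  have hm1nn : 0 ≤ m1 := Finset.le_inf' _ _ fun b _ => hd_nonneg b 0
  -- potentials
  set φ : Fin (n + 1) → ℝ := fun v => if v = 0 then m1 else d v 0 with hφdef
  set ψ : Fin (n + 1) → ℝ := fun v => if v = 0 then m0 else d 0 v with hψdef
  -- residual flow
  set G : Fin (n + 1) → Fin (n + 1) → ℝ := fun i j => Q * X i j - F i j with hGdef
  have hG_nonneg : ∀ i j, i ≠ j → 0 ≤ G i j := fun i j hij => by
    simp only [hGdef]; linarith [hFcap i j hij]
  -- divergence notation
  have hdivF_glob : ∑ v, ((∑ j ∈ Finset.univ.filter (fun j => j ≠ v), F v j)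
      - (∑ j ∈ Finset.univ.filter (fun j => j ≠ v), F j v)) = 0 := by
    rw [Finset.sum_sub_distrib, sum_swap_ne (fun i j => F j i)]
    exact sub_self _
  have hsplit : ∀ g : Fin (n + 1) → ℝ, ∑ v, g v = g 0 + ∑ v ∈ ICset n, g v := by
    intro g
    rw [ICset, ← Finset.add_sum_erase _ g (Finset.mem_univ 0)]
  have hdivF0 : (∑ j ∈ Finset.univ.filter (fun j => j ≠ (0 : Fin (n+1))), F 0 j)
      - (∑ j ∈ Finset.univ.filter (fun j => j ≠ (0 : Fin (n+1))), F j 0) = -Wtot := by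
    have h := hdivF_glob
    rw [hsplit (fun v => (∑ j ∈ Finset.univ.filter (fun j => j ≠ v), F v j)
      - (∑ j ∈ Finset.univ.filter (fun j => j ≠ v), F j v))] at h
    have h2 : ∑ v ∈ ICset n, ((∑ j ∈ Finset.univ.filter (fun j => j ≠ v), F v j)
      - (∑ j ∈ Finset.univ.filter (fun j => j ≠ v), F j v)) = Wtot := by
      rw [hWtotdef]
      exact Finset.sum_congr rfl fun v hv =>
        hflow v (Finset.ne_of_mem_erase hv)
    rw [h2] at h
    linarith
  have hdivX : ∀ v : Fin (n + 1),
      (∑ j ∈ Finset.univ.filter (fun j => j ≠ v), X v j)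
        - (∑ j ∈ Finset.univ.filter (fun j => j ≠ v), X j v) = 0 := by
    intro v
    by_cases hv : v = 0
    · subst hv
      rw [hfe, hdepot]
      exact sub_self _
    · rw [hdeg_out v hv, hdeg_in v hv]; exact sub_self _
  have houtX0 : ∑ j ∈ Finset.univ.filter (fun j => j ≠ (0 : Fin (n+1))), X 0 j = V := by
    rw [hfe, hVdef]
  have hinX0 : ∑ j ∈ Finset.univ.filter (fun j => j ≠ (0 : Fin (n+1))), X j 0 = V := by
    rw [hfe, hVdef, hdepot]
  -- the pointwise master inequality
  have hpt : ∀ i j : Fin (n + 1), j ≠ i →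
      ((φ i - φ j) * F i j + (ψ j - ψ i) * G i j)
        + (if i = 0 then m0 else 0) * (F i j + G i j)
        + (if j = 0 then m1 else 0) * (F i j + G i j)
      ≤ Q * (d i j * X i j) := by
    intro i j hji
    have hij : i ≠ j := fun h => hji h.symm
    have hFn := hF_nonneg i j hij
    have hGn := hG_nonneg i j hij
    have ha : (φ i - φ j) + (if i = 0 then m0 else 0) + (if j = 0 then m1 else 0)
        ≤ d i j := by
      by_cases hi : i = 0
      · subst hi
        have hj0 : j ≠ 0 := fun h => hij h.symm
        simp only [hφdef, if_pos rfl, if_neg hj0, if_true]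
        have h1 := hm0le j hj0
        have h2 := hm1le j hj0
        have h3 := hd_nonneg j 0
        linarith
      · by_cases hj : j = 0
        · subst hj
          simp only [hφdef, if_neg hi, if_pos rfl, if_true]
          linarith
        · simp only [hφdef, if_neg hi, if_neg hj]
          have := hd_tri i j 0
          linarith
    have hb : (ψ j - ψ i) + (if i = 0 then m0 else 0) + (if j = 0 then m1 else 0)
        ≤ d i j := by
      by_cases hi : i = 0
      · subst hi
        have hj0 : j ≠ 0 := fun h => hij h.symm
        simp only [hψdef, if_pos rfl, if_neg hj0, if_true]
        linarith
      · by_cases hj : j = 0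
        · subst hj
          simp only [hψdef, if_neg hi, if_pos rfl, if_true]
          have h1 := hm0le i hi
          have h2 := hm1le i hi
          have h3 := hd_nonneg 0 i
          linarith
        · simp only [hψdef, if_neg hi, if_neg hj]
          have := hd_tri 0 i j
          linarith
    have hQX : Q * (d i j * X i j) = d i j * (F i j + G i j) := by
      simp only [hGdef]; ring
    rw [hQX]
    have h1 : ((φ i - φ j) + (if i = 0 then m0 else 0) + (if j = 0 then m1 else 0))
        * F i j ≤ d i j * F i j := mul_le_mul_of_nonneg_right ha hFn
    have h2 : ((ψ j - ψ i) + (if i = 0 then m0 else 0) + (if j = 0 then m1 else 0))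
        * G i j ≤ d i j * G i j := mul_le_mul_of_nonneg_right hb hGn
    calc ((φ i - φ j) * F i j + (ψ j - ψ i) * G i j)
        + (if i = 0 then m0 else 0) * (F i j + G i j)
        + (if j = 0 then m1 else 0) * (F i j + G i j)
        = ((φ i - φ j) + (if i = 0 then m0 else 0) + (if j = 0 then m1 else 0)) * F i j
          + ((ψ j - ψ i) + (if i = 0 then m0 else 0) + (if j = 0 then m1 else 0)) * G i j := by
          ring
      _ ≤ d i j * F i j + d i j * G i j := add_le_add h1 h2
      _ = d i j * (F i j + G i j) := by ring
  -- sum of the master inequality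
  have hsum : (∑ i, ∑ j ∈ Finset.univ.filter (fun j => j ≠ i),
      (((φ i - φ j) * F i j + (ψ j - ψ i) * G i j)
        + (if i = 0 then m0 else 0) * (F i j + G i j)
        + (if j = 0 then m1 else 0) * (F i j + G i j)))
      ≤ Q * T := by
    rw [hTdef, Finset.mul_sum]
    refine Finset.sum_le_sum fun i _ => ?_
    rw [Finset.mul_sum]
    exact Finset.sum_le_sum fun j hj =>
      hpt i j (by simpa using hj)
  -- compute the left-hand sum exactly
  have hcomp : (∑ i, ∑ j ∈ Finset.univ.filter (fun j => j ≠ i),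
      (((φ i - φ j) * F i j + (ψ j - ψ i) * G i j)
        + (if i = 0 then m0 else 0) * (F i j + G i j)
        + (if j = 0 then m1 else 0) * (F i j + G i j)))
      = S + (m0 + m1) * (Q * V - Wtot) := by
    have hdistrib : (∑ i, ∑ j ∈ Finset.univ.filter (fun j => j ≠ i),
        (((φ i - φ j) * F i j + (ψ j - ψ i) * G i j)
          + (if i = 0 then m0 else 0) * (F i j + G i j)
          + (if j = 0 then m1 else 0) * (F i j + G i j)))
        = (∑ i, ∑ j ∈ Finset.univ.filter (fun j => j ≠ i), (φ i - φ j) * F i j)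
          + (∑ i, ∑ j ∈ Finset.univ.filter (fun j => j ≠ i), (ψ j - ψ i) * G i j)
          + (∑ i, ∑ j ∈ Finset.univ.filter (fun j => j ≠ i),
              (if i = 0 then m0 else 0) * (F i j + G i j))
          + (∑ i, ∑ j ∈ Finset.univ.filter (fun j => j ≠ i),
              (if j = 0 then m1 else 0) * (F i j + G i j)) := by
      simp only [Finset.sum_add_distrib]
    have e1 : (∑ i, ∑ j ∈ Finset.univ.filter (fun j => j ≠ i), (φ i - φ j) * F i j)
        = m1 * (-Wtot) + ∑ v ∈ ICset n, d v 0 * W v := by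
      rw [div_identity φ F]
      rw [hsplit (fun v => φ v * ((∑ j ∈ Finset.univ.filter (fun j => j ≠ v), F v j)
          - (∑ j ∈ Finset.univ.filter (fun j => j ≠ v), F j v)))]
      congr 1
      · rw [hdivF0]
        simp [hφdef]
      · exact Finset.sum_congr rfl fun v hv => by
          have hv0 : v ≠ 0 := Finset.ne_of_mem_erase hv
          rw [hflow v hv0]
          simp [hφdef, hv0]
    have e2 : (∑ i, ∑ j ∈ Finset.univ.filter (fun j => j ≠ i), (ψ j - ψ i) * G i j)
        = m0 * (-Wtot) + ∑ v ∈ ICset n, d 0 v * W v := by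
      have hstep : (∑ i, ∑ j ∈ Finset.univ.filter (fun j => j ≠ i), (ψ j - ψ i) * G i j)
          = ∑ v, ψ v * ((∑ j ∈ Finset.univ.filter (fun j => j ≠ v), F v j)
              - (∑ j ∈ Finset.univ.filter (fun j => j ≠ v), F j v)) := by
        have hL : (∑ i, ∑ j ∈ Finset.univ.filter (fun j => j ≠ i), (ψ j - ψ i) * G i j)
            = ∑ i, ∑ j ∈ Finset.univ.filter (fun j => j ≠ i),
                ((fun v => -ψ v) i - (fun v => -ψ v) j) * G i j :=
          Finset.sum_congr rfl fun i _ => Finset.sum_congr rfl fun j _ => by ring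
        rw [hL, div_identity (fun v => -ψ v) G]
        refine Finset.sum_congr rfl fun v _ => ?_
        have houtG : (∑ j ∈ Finset.univ.filter (fun j => j ≠ v), G v j)
            = Q * (∑ j ∈ Finset.univ.filter (fun j => j ≠ v), X v j)
              - ∑ j ∈ Finset.univ.filter (fun j => j ≠ v), F v j := by
          simp only [hGdef]
          rw [Finset.sum_sub_distrib, Finset.mul_sum]
        have hinG : (∑ j ∈ Finset.univ.filter (fun j => j ≠ v), G j v)
            = Q * (∑ j ∈ Finset.univ.filter (fun j => j ≠ v), X j v)
              - ∑ j ∈ Finset.univ.filter (fun j => j ≠ v), F j v := by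
          simp only [hGdef]
          rw [Finset.sum_sub_distrib, Finset.mul_sum]
        rw [houtG, hinG]
        linear_combination (-(ψ v)) * Q * (hdivX v)
      rw [hstep]
      rw [hsplit (fun v => ψ v * ((∑ j ∈ Finset.univ.filter (fun j => j ≠ v), F v j)
          - (∑ j ∈ Finset.univ.filter (fun j => j ≠ v), F j v)))]
      congr 1
      · rw [hdivF0]
        simp [hψdef]
      · exact Finset.sum_congr rfl fun v hv => by
          have hv0 : v ≠ 0 := Finset.ne_of_mem_erase hv
          rw [hflow v hv0]
          simp [hψdef, hv0]
    have hFG0out : (∑ j ∈ Finset.univ.filter (fun j => j ≠ (0 : Fin (n+1))),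
        (F 0 j + G 0 j)) = Q * V := by
      have hterm : ∀ j : Fin (n+1), F 0 j + G 0 j = Q * X 0 j := fun j => by
        simp only [hGdef]; ring
      calc (∑ j ∈ Finset.univ.filter (fun j => j ≠ (0 : Fin (n+1))), (F 0 j + G 0 j))
          = ∑ j ∈ Finset.univ.filter (fun j => j ≠ (0 : Fin (n+1))), Q * X 0 j :=
            Finset.sum_congr rfl fun j _ => hterm j
        _ = Q * ∑ j ∈ Finset.univ.filter (fun j => j ≠ (0 : Fin (n+1))), X 0 j := by
            rw [Finset.mul_sum]
        _ = Q * V := by rw [houtX0]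
    have hFG0in : (∑ i ∈ Finset.univ.filter (fun i => i ≠ (0 : Fin (n+1))),
        (F i 0 + G i 0)) = Q * V := by
      have hterm : ∀ i : Fin (n+1), F i 0 + G i 0 = Q * X i 0 := fun i => by
        simp only [hGdef]; ring
      calc (∑ i ∈ Finset.univ.filter (fun i => i ≠ (0 : Fin (n+1))), (F i 0 + G i 0))
          = ∑ i ∈ Finset.univ.filter (fun i => i ≠ (0 : Fin (n+1))), Q * X i 0 :=
            Finset.sum_congr rfl fun i _ => hterm i
        _ = Q * ∑ i ∈ Finset.univ.filter (fun i => i ≠ (0 : Fin (n+1))), X i 0 := by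
            rw [Finset.mul_sum]
        _ = Q * V := by rw [hinX0]
    have e3 : (∑ i, ∑ j ∈ Finset.univ.filter (fun j => j ≠ i),
        (if i = 0 then m0 else 0) * (F i j + G i j)) = m0 * (Q * V) := by
      have h1 : ∀ i : Fin (n+1), (∑ j ∈ Finset.univ.filter (fun j => j ≠ i),
          (if i = 0 then m0 else 0) * (F i j + G i j))
          = if i = 0 then
              m0 * ∑ j ∈ Finset.univ.filter (fun j => j ≠ i), (F i j + G i j)
            else 0 := by
        intro i
        by_cases hi : i = 0
        · simp only [hi, if_true, Finset.mul_sum]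
        · simp [hi]
      rw [Finset.sum_congr rfl fun i _ => h1 i]
      rw [Finset.sum_ite_eq' Finset.univ (0 : Fin (n+1))
        (fun i => m0 * ∑ j ∈ Finset.univ.filter (fun j => j ≠ i), (F i j + G i j))]
      simp only [Finset.mem_univ, if_true]
      rw [hFG0out]
    have e4 : (∑ i, ∑ j ∈ Finset.univ.filter (fun j => j ≠ i),
        (if j = 0 then m1 else 0) * (F i j + G i j)) = m1 * (Q * V) := by
      rw [sum_swap_ne (fun i j => (if j = 0 then m1 else 0) * (F i j + G i j))]
      have h1 : ∀ j : Fin (n+1), (∑ i ∈ Finset.univ.filter (fun i => i ≠ j),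
          (if j = 0 then m1 else 0) * (F i j + G i j))
          = if j = 0 then
              m1 * ∑ i ∈ Finset.univ.filter (fun i => i ≠ j), (F i j + G i j)
            else 0 := by
        intro j
        by_cases hj : j = 0
        · simp only [hj, if_true, Finset.mul_sum]
        · simp [hj]
      rw [Finset.sum_congr rfl fun j _ => h1 j]
      rw [Finset.sum_ite_eq' Finset.univ (0 : Fin (n+1))
        (fun j => m1 * ∑ i ∈ Finset.univ.filter (fun i => i ≠ j), (F i j + G i j))]
      simp only [Finset.mem_univ, if_true]
      rw [hFG0in]
    rw [hdistrib, e1, e2, e3, e4]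
    have hSsplit : S = (∑ v ∈ ICset n, d 0 v * W v) + ∑ v ∈ ICset n, d v 0 * W v := by
      rw [hSdef, ← Finset.sum_add_distrib]
      exact Finset.sum_congr rfl fun v _ => by ring
    rw [hSsplit]
    ring
  have hkey : S + (m0 + m1) * (Q * V - Wtot) ≤ Q * T := hcomp ▸ hsum
  -- integrality and lower bound for V
  obtain ⟨z, hz⟩ := sum_int_of_binary (fun i => X 0 i) (ICset n)
    (fun i hi => hX_bin 0 i (fun h => (Finset.ne_of_mem_erase hi) h.symm))
  have hWleQV : Wtot ≤ Q * V := by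
    have hin : ∑ j ∈ Finset.univ.filter (fun j => j ≠ (0 : Fin (n+1))), F j 0
        ≤ Q * V := by
      calc ∑ j ∈ Finset.univ.filter (fun j => j ≠ (0 : Fin (n+1))), F j 0
          ≤ ∑ j ∈ Finset.univ.filter (fun j => j ≠ (0 : Fin (n+1))), Q * X j 0 :=
            Finset.sum_le_sum fun j hj => hFcap j 0 (by simpa using hj)
        _ = Q * ∑ j ∈ ICset n, X j 0 := by rw [hfe, Finset.mul_sum]
        _ = Q * V := by rw [hdepot]
    have hout : 0 ≤ ∑ j ∈ Finset.univ.filter (fun j => j ≠ (0 : Fin (n+1))), F 0 j :=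
      Finset.sum_nonneg fun j hj => hF_nonneg 0 j (Ne.symm (by simpa using hj))
    linarith [hdivF0]
  have hceil : (⌈Wtot / Q⌉ : ℝ) ≤ V := by
    have hdq : Wtot / Q ≤ (z : ℝ) := by
      rw [div_le_iff₀ hQ]
      calc Wtot ≤ Q * V := hWleQV
        _ = (z : ℝ) * Q := by rw [← hz]; ring
    have : ⌈Wtot / Q⌉ ≤ z := Int.ceil_le.mpr hdq
    calc (⌈Wtot / Q⌉ : ℝ) ≤ (z : ℝ) := by exact_mod_cast this
      _ = V := hz.symm
  -- final assembly
  have hT : (1 / Q) * S + (m0 + m1) * ((⌈Wtot / Q⌉ : ℝ) - Wtot / Q) ≤ T := by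
    have h1 : (1 / Q) * (S + (m0 + m1) * (Q * V - Wtot)) ≤ (1 / Q) * (Q * T) :=
      mul_le_mul_of_nonneg_left hkey (by positivity)
    have hQne : Q ≠ 0 := ne_of_gt hQ
    have h2 : (1 / Q) * (Q * T) = T := by field_simp
    have h3 : (1 / Q) * (S + (m0 + m1) * (Q * V - Wtot))
        = (1 / Q) * S + (m0 + m1) * (V - Wtot / Q) := by
      rw [mul_add, mul_sub, mul_sub, div_eq_mul_inv, div_eq_mul_inv]
      field_simp
    have h4 : (m0 + m1) * ((⌈Wtot / Q⌉ : ℝ) - Wtot / Q)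
        ≤ (m0 + m1) * (V - Wtot / Q) := by
      apply mul_le_mul_of_nonneg_left _ (by linarith)
      linarith [hceil]
    rw [h2, h3] at h1
    linarith
  have hcT := mul_le_mul_of_nonneg_left hT hc
  have hvV := mul_le_mul_of_nonneg_left hceil hvcost
  linarith
end

section
/- Consider the SPIRP with node set I = {0,1,…,n} (depot 0, collection nodes IC = {1,…,n}, n ≥ 1), periods T = {1,…,τ}, nonnegative distances d : I × I → ℝ satisfying the triangle inequality, nonnegative accumulation rates a_{it} (with a_{0t} = 0), nonnegative requirements r_t, nonnegative costs c, v, h, p, capacity Q > 0, and A_i = Σ_{t∈T} a_{it}. For every feasible solution (X, Y, Z, F, W, I, S) of formulation IR, there exist integers V_t ≥ 0 and reals R_t ∈ [0,1] (t ∈ T) such that (Y, Z, W, I, S, V, R) is a feasible solution of the relaxation IRR, and the IRR objective value of (Y, Z, W, I, S, V, R) is at most the IR objective value of (X, Y, Z, F, W, I, S). Consequently, the optimal value z_IRR of IRR is a lower bound on the optimal value z_IR of IR. -/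
set_option maxHeartbeats 1600000

lemma stmt8_swap_sum {m : ℕ} (g : Fin m → ℝ) (f : Fin m → Fin m → ℝ) :
    ∑ i, ∑ j ∈ Finset.univ.filter (fun j => j ≠ i), g j * f i j
      = ∑ i, g i * ∑ j ∈ Finset.univ.filter (fun j => j ≠ i), f j i := by
  calc ∑ i, ∑ j ∈ Finset.univ.filter (fun j => j ≠ i), g j * f i j
      = ∑ i, ∑ j, if j ≠ i then g j * f i j else 0 := by
        simp [Finset.sum_filter]
    _ = ∑ j, ∑ i, if j ≠ i then g j * f i j else 0 := Finset.sum_comm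
    _ = ∑ j, g j * ∑ i ∈ Finset.univ.filter (fun i => i ≠ j), f i j := by
        refine Finset.sum_congr rfl fun j _ => ?_
        rw [Finset.mul_sum, Finset.sum_filter]
        refine Finset.sum_congr rfl fun i _ => ?_
        simp [ne_comm]

lemma stmt8_sum_pot {m : ℕ} (g : Fin m → ℝ) (f : Fin m → Fin m → ℝ) :
    ∑ i, ∑ j ∈ Finset.univ.filter (fun j => j ≠ i), (g i - g j) * f i j
      = ∑ i, g i * ((∑ j ∈ Finset.univ.filter (fun j => j ≠ i), f i j)
          - (∑ j ∈ Finset.univ.filter (fun j => j ≠ i), f j i)) := by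
  have h1 : ∀ i, ∑ j ∈ Finset.univ.filter (fun j => j ≠ i), (g i - g j) * f i j
      = g i * (∑ j ∈ Finset.univ.filter (fun j => j ≠ i), f i j)
        - ∑ j ∈ Finset.univ.filter (fun j => j ≠ i), g j * f i j := by
    intro i
    rw [Finset.mul_sum, ← Finset.sum_sub_distrib]
    exact Finset.sum_congr rfl fun j _ => by ring
  simp only [h1, Finset.sum_sub_distrib, stmt8_swap_sum g f]
  rw [← Finset.sum_sub_distrib]
  exact Finset.sum_congr rfl fun i _ => by ring

/-- validity of the relaxation without routing (IRR) of the SPIRP.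
For every feasible solution `(X, Y, Z, F, W, Inv, S)` of formulation IR there exist
integers `V t ≥ 0` and reals `R t ∈ [0,1]` such that `(Y, Z, W, Inv, S, V, R)` is
feasible for IRR (the IRR constraints shared with IR being the hypotheses below),
and the IRR objective value is at most the IR objective value.
Nodes are `Fin (n+1)` with depot `0`; periods are `t ∈ Finset.Icc 1 τ`, with
inventories indexed by `t ∈ {0,…,τ}` and `A i = ∑ t ∈ Icc 1 τ, a i t`. -/
theorem stmt_8 (n τ : ℕ) (hn : 1 ≤ n) (hτ : 1 ≤ τ)
    (d : Fin (n + 1) → Fin (n + 1) → ℝ)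
    (hd_nonneg : ∀ u v, 0 ≤ d u v)
    (hd_tri : ∀ u v w, d u w ≤ d u v + d v w)
    (a : Fin (n + 1) → ℕ → ℝ)
    (ha_nonneg : ∀ i t, 0 ≤ a i t)
    (ha_depot : ∀ t, a 0 t = 0)
    (r : ℕ → ℝ) (hr_nonneg : ∀ t, 0 ≤ r t)
    (c v h p : ℝ) (hc : 0 ≤ c) (hv : 0 ≤ v) (hh : 0 ≤ h) (hp : 0 ≤ p)
    (Q : ℝ) (hQ : 0 < Q)
    (X : Fin (n + 1) → Fin (n + 1) → ℕ → ℝ)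
    (Y : Fin (n + 1) → ℕ → ℝ)
    (Z : Fin (n + 1) → ℝ)
    (F : Fin (n + 1) → Fin (n + 1) → ℕ → ℝ)
    (W : Fin (n + 1) → ℕ → ℝ)
    (Inv : Fin (n + 1) → ℕ → ℝ)
    (S : ℕ → ℝ)
    -- integrality and nonnegativity requirements (std-19)–(std-25)
    (hX_bin : ∀ i j, ∀ t ∈ Finset.Icc 1 τ, i ≠ j → X i j t = 0 ∨ X i j t = 1)
    (hY_bin : ∀ i, i ≠ 0 → ∀ t ∈ Finset.Icc 1 τ, Y i t = 0 ∨ Y i t = 1)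
    (hZ_bin : ∀ i, i ≠ 0 → Z i = 0 ∨ Z i = 1)
    (hF_nonneg : ∀ i j, ∀ t ∈ Finset.Icc 1 τ, i ≠ j → 0 ≤ F i j t)
    (hW_nonneg : ∀ i, i ≠ 0 → ∀ t ∈ Finset.Icc 1 τ, 0 ≤ W i t)
    (hI_nonneg : ∀ i, ∀ t ∈ Finset.Icc 0 τ, 0 ≤ Inv i t)
    (hS_nonneg : ∀ t ∈ Finset.Icc 1 τ, 0 ≤ S t)
    -- (std-1) flow conservation at collection nodes
    (hflow : ∀ i, i ≠ 0 → ∀ t ∈ Finset.Icc 1 τ,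
      (∑ j ∈ Finset.univ.filter (fun j => j ≠ i), F i j t)
        - (∑ j ∈ Finset.univ.filter (fun j => j ≠ i), F j i t) = W i t)
    -- (std-2)
    (hFcap : ∀ i j, ∀ t ∈ Finset.Icc 1 τ, i ≠ j →
      F i j t ≤ (Q - a j t) * X i j t)
    -- (std-3)
    (hFcap' : ∀ i j, j ≠ 0 → ∀ t ∈ Finset.Icc 1 τ, i ≠ j →
      F i j t ≤ Q - W j t)
    -- (std-4)
    (hFlb : ∀ i j, i ≠ 0 → ∀ t ∈ Finset.Icc 1 τ, i ≠ j →
      W i t - (∑ s ∈ Finset.Icc 1 τ, a i s) * (1 - X i j t) ≤ F i j t)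
    -- (std-5), (std-6) degree constraints
    (hdeg_in : ∀ i, i ≠ 0 → ∀ t ∈ Finset.Icc 1 τ,
      (∑ j ∈ Finset.univ.filter (fun j => j ≠ i), X j i t) = Y i t)
    (hdeg_out : ∀ i, i ≠ 0 → ∀ t ∈ Finset.Icc 1 τ,
      (∑ j ∈ Finset.univ.filter (fun j => j ≠ i), X i j t) = Y i t)
    -- (std-7) depot vehicle balance
    (hdepot : ∀ t ∈ Finset.Icc 1 τ,
      ∑ i ∈ ICset n, X i 0 t = ∑ i ∈ ICset n, X 0 i t)
    -- (std-9)
    (hWY : ∀ i, i ≠ 0 → ∀ t ∈ Finset.Icc 1 τ,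
      W i t ≤ (∑ s ∈ Finset.Icc 1 τ, a i s) * Y i t)
    -- (std-10)
    (hIY : ∀ i, i ≠ 0 → ∀ t ∈ Finset.Icc 1 τ,
      Inv i t ≤ (∑ s ∈ Finset.Icc 1 τ, a i s) * (1 - Y i t))
    -- (std-11) inventory balance at collection nodes
    (hbal : ∀ i, i ≠ 0 → ∀ t ∈ Finset.Icc 1 τ,
      Inv i t = Inv i (t - 1) + a i t * Z i - W i t)
    -- (std-12) cyclicity
    (hcyc : ∀ i, Inv i 0 = Inv i τ)
    -- (std-13) inventory balance at the depot
    (hdbal : ∀ t ∈ Finset.Icc 1 τ,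
      Inv 0 t = Inv 0 (t - 1) + (∑ i ∈ ICset n, W i t) + S t - r t)
    -- (std-14), (std-15)
    (hZY : ∀ i, i ≠ 0 → Z i ≤ ∑ t ∈ Finset.Icc 1 τ, Y i t)
    (hYZ : ∀ i, i ≠ 0 → ∀ t ∈ Finset.Icc 1 τ, Y i t ≤ Z i) :
    ∃ (V : ℕ → ℤ) (R : ℕ → ℝ),
      -- (relax-23a) nonnegative integer numbers of vehicles
      (∀ t ∈ Finset.Icc 1 τ, 0 ≤ V t) ∧
      -- (relax-26)
      (∀ t ∈ Finset.Icc 1 τ, 0 ≤ R t ∧ R t ≤ 1) ∧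
      -- (relax-1)
      (∀ t ∈ Finset.Icc 1 τ, (V t : ℝ) = (∑ i ∈ ICset n, W i t / Q) + R t) ∧
      -- (relax-8)
      (∀ i, i ≠ 0 → ∀ t ∈ Finset.Icc 1 τ, W i t ≤ Q * Y i t) ∧
      -- the IRR objective value is at most the IR objective value
      c * (∑ t ∈ Finset.Icc 1 τ,
            ((∑ i ∈ ICset n, (d 0 i + d i 0) * (W i t / Q))
              + (minToIC n hn d + minFromIC n hn d) * R t))
        + v * (∑ t ∈ Finset.Icc 1 τ, (V t : ℝ))
        + h * (∑ t ∈ Finset.Icc 1 τ, Inv 0 t)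
        + p * (∑ t ∈ Finset.Icc 1 τ, S t)
      ≤ c * (∑ t ∈ Finset.Icc 1 τ,
              ∑ i, ∑ j ∈ Finset.univ.filter (fun j => j ≠ i), d i j * X i j t)
        + v * (∑ t ∈ Finset.Icc 1 τ, ∑ i ∈ ICset n, X 0 i t)
        + h * (∑ t ∈ Finset.Icc 1 τ, Inv 0 t)
        + p * (∑ t ∈ Finset.Icc 1 τ, S t) := by
  classical
  set m0 := minToIC n hn d with hm0def
  set m1 := minFromIC n hn d with hm1def
  have hmem : ∀ i : Fin (n+1), i ∈ ICset n ↔ i ≠ 0 := by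
    intro i; simp [ICset]
  have hICfilter : ICset n = Finset.univ.filter (fun i => i ≠ 0) := by
    rw [ICset, Finset.filter_ne']
  have hm0le : ∀ i : Fin (n+1), i ≠ 0 → m0 ≤ d 0 i := fun i hi =>
    Finset.inf'_le _ ((hmem i).mpr hi)
  have hm1le : ∀ i : Fin (n+1), i ≠ 0 → m1 ≤ d i 0 := fun i hi =>
    Finset.inf'_le _ ((hmem i).mpr hi)
  have hm0nn : 0 ≤ m0 := Finset.le_inf' _ _ fun i _ => hd_nonneg 0 i
  have hm1nn : 0 ≤ m1 := Finset.le_inf' _ _ fun i _ => hd_nonneg i 0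
  set φ : Fin (n+1) → ℝ := fun i => if i = 0 then 0 else d 0 i - m0 with hφdef
  set ψ : Fin (n+1) → ℝ := fun i => if i = 0 then 0 else d i 0 - m1 with hψdef
  have hφ0 : φ 0 = 0 := by simp [hφdef]
  have hψ0 : ψ 0 = 0 := by simp [hψdef]
  have hφv : ∀ i : Fin (n+1), i ≠ 0 → φ i = d 0 i - m0 := fun i hi => by
    simp [hφdef, hi]
  have hψv : ∀ i : Fin (n+1), i ≠ 0 → ψ i = d i 0 - m1 := fun i hi => by
    simp [hψdef, hi]
  have hφnn : ∀ i : Fin (n+1), 0 ≤ φ i := by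
    intro i; by_cases hi : i = 0
    · rw [hi, hφ0]
    · rw [hφv i hi]; have := hm0le i hi; linarith
  have hψnn : ∀ i : Fin (n+1), 0 ≤ ψ i := by
    intro i; by_cases hi : i = 0
    · rw [hi, hψ0]
    · rw [hψv i hi]; have := hm1le i hi; linarith
  -- main per-period facts
  have hmain : ∀ t ∈ Finset.Icc 1 τ,
      ((⌈(∑ i ∈ ICset n, W i t) / Q⌉ : ℝ) ≤ ∑ i ∈ ICset n, X 0 i t) ∧
      ((∑ i ∈ ICset n, (d 0 i + d i 0) * (W i t / Q))
          + (m0 + m1) * ((⌈(∑ i ∈ ICset n, W i t) / Q⌉ : ℝ) - ∑ i ∈ ICset n, (W i t / Q))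
        ≤ ∑ i, ∑ j ∈ Finset.univ.filter (fun j => j ≠ i), d i j * X i j t) := by
    intro t ht
    have hXnn : ∀ i j : Fin (n+1), j ≠ i → 0 ≤ X i j t := by
      intro i j hji
      rcases hX_bin i j t ht (Ne.symm hji) with hx | hx <;> rw [hx] <;> norm_num
    have hFnn : ∀ i j : Fin (n+1), j ≠ i → 0 ≤ F i j t := fun i j hji =>
      hF_nonneg i j t ht (Ne.symm hji)
    have hFQ : ∀ i j : Fin (n+1), j ≠ i → F i j t ≤ Q * X i j t := by
      intro i j hji
      have h1 := hFcap i j t ht (Ne.symm hji)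
      nlinarith [ha_nonneg j t, hXnn i j hji]
    -- ψ-flow identity
    have hψs : ∑ i, ∑ j ∈ Finset.univ.filter (fun j => j ≠ i), (ψ i - ψ j) * F i j t
        = ∑ i ∈ ICset n, ψ i * W i t := by
      rw [stmt8_sum_pot, hICfilter, Finset.sum_filter]
      refine Finset.sum_congr rfl fun i _ => ?_
      by_cases hi : i = 0
      · simp [hi, hψ0]
      · rw [hflow i hi t ht, if_pos hi]
    -- φ-flow identity (reverse flow G = Q·X − F)
    have hφs : ∑ i, ∑ j ∈ Finset.univ.filter (fun j => j ≠ i),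
          (φ i - φ j) * (Q * X i j t - F i j t)
        = -∑ i ∈ ICset n, φ i * W i t := by
      rw [stmt8_sum_pot, hICfilter, Finset.sum_filter, ← Finset.sum_neg_distrib]
      refine Finset.sum_congr rfl fun i _ => ?_
      have hsplit1 : (∑ j ∈ Finset.univ.filter (fun j => j ≠ i), (Q * X i j t - F i j t))
          = Q * (∑ j ∈ Finset.univ.filter (fun j => j ≠ i), X i j t)
            - ∑ j ∈ Finset.univ.filter (fun j => j ≠ i), F i j t := by
        rw [Finset.sum_sub_distrib, Finset.mul_sum]
      have hsplit2 : (∑ j ∈ Finset.univ.filter (fun j => j ≠ i), (Q * X j i t - F j i t))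
          = Q * (∑ j ∈ Finset.univ.filter (fun j => j ≠ i), X j i t)
            - ∑ j ∈ Finset.univ.filter (fun j => j ≠ i), F j i t := by
        rw [Finset.sum_sub_distrib, Finset.mul_sum]
      by_cases hi : i = 0
      · simp [hi, hφ0]
      · rw [if_pos hi, hsplit1, hsplit2, hdeg_out i hi t ht, hdeg_in i hi t ht]
        have hf := hflow i hi t ht
        linear_combination (-(φ i)) * hf
    -- combination
    have hcomb : ∑ i ∈ ICset n, (ψ i + φ i) * W i t
        = ∑ i, ∑ j ∈ Finset.univ.filter (fun j => j ≠ i),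
            ((ψ i - ψ j) * F i j t + (φ j - φ i) * (Q * X i j t - F i j t)) := by
      have e1 : ∑ i, ∑ j ∈ Finset.univ.filter (fun j => j ≠ i),
            ((ψ i - ψ j) * F i j t + (φ j - φ i) * (Q * X i j t - F i j t))
          = (∑ i, ∑ j ∈ Finset.univ.filter (fun j => j ≠ i), (ψ i - ψ j) * F i j t)
            - (∑ i, ∑ j ∈ Finset.univ.filter (fun j => j ≠ i),
                (φ i - φ j) * (Q * X i j t - F i j t)) := by
        rw [← Finset.sum_sub_distrib]
        refine Finset.sum_congr rfl fun i _ => ?_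
        rw [← Finset.sum_sub_distrib]
        exact Finset.sum_congr rfl fun j _ => by ring
      rw [e1, hψs, hφs, sub_neg_eq_add, ← Finset.sum_add_distrib]
      exact Finset.sum_congr rfl fun i _ => by ring
    -- per-arc bound
    have hptbound : ∑ i, ∑ j ∈ Finset.univ.filter (fun j => j ≠ i),
          ((ψ i - ψ j) * F i j t + (φ j - φ i) * (Q * X i j t - F i j t))
        ≤ ∑ i, ∑ j ∈ Finset.univ.filter (fun j => j ≠ i),
            (Q * (d i j * X i j t)
              - ((if i = 0 then Q * m0 * X i j t else 0)
                 + (if j = 0 then Q * m1 * X i j t else 0))) := by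
      refine Finset.sum_le_sum fun i _ => Finset.sum_le_sum fun j hj => ?_
      have hji : j ≠ i := (Finset.mem_filter.mp hj).2
      have hxnn := hXnn i j hji
      have hfnn := hFnn i j hji
      have hfQ := hFQ i j hji
      by_cases hi : i = 0
      · subst hi
        have hj0 : j ≠ 0 := hji
        rw [if_pos rfl, if_neg hj0, hφ0, hψ0, hφv j hj0, hψv j hj0]
        have h1 : 0 ≤ (d j 0 - m1) * F 0 j t :=
          mul_nonneg (by have := hm1le j hj0; linarith) hfnn
        have h2 : 0 ≤ d 0 j - m0 := by have := hm0le j hj0; linarith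
        nlinarith [mul_nonneg h2 hfnn]
      · by_cases hj0 : j = 0
        · subst hj0
          rw [if_neg hi, if_pos rfl, hφ0, hψ0, hφv i hi, hψv i hi]
          have h1 : 0 ≤ d i 0 - m1 := by have := hm1le i hi; linarith
          have h2 : 0 ≤ d 0 i - m0 := by have := hm0le i hi; linarith
          nlinarith [mul_nonneg h2 (sub_nonneg.mpr hfQ), mul_le_mul_of_nonneg_left hfQ h1]
        · rw [if_neg hi, if_neg hj0, hφv i hi, hφv j hj0, hψv i hi, hψv j hj0]
          have hα : (d i 0 - m1) - (d j 0 - m1) ≤ d i j := by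
            have := hd_tri i j 0; linarith
          have hβ : (d 0 j - m0) - (d 0 i - m0) ≤ d i j := by
            have := hd_tri 0 i j; linarith
          nlinarith [mul_le_mul_of_nonneg_right hα hfnn,
            mul_le_mul_of_nonneg_right hβ (sub_nonneg.mpr hfQ)]
    -- RHS splitting
    have hsum_ite1 : ∑ i, ∑ j ∈ Finset.univ.filter (fun j => j ≠ i),
          (if i = 0 then Q * m0 * X i j t else 0)
        = Q * m0 * ∑ i ∈ ICset n, X 0 i t := by
      have inner : ∀ i : Fin (n+1), (∑ j ∈ Finset.univ.filter (fun j => j ≠ i),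
            (if i = 0 then Q * m0 * X i j t else 0))
          = if i = 0 then Q * m0 * (∑ j ∈ Finset.univ.filter (fun j => j ≠ i), X i j t) else 0 := by
        intro i; by_cases hi : i = 0 <;> simp [hi, Finset.mul_sum]
      rw [Finset.sum_congr rfl fun i _ => inner i,
        Finset.sum_ite_eq' Finset.univ (0 : Fin (n+1))
          (fun i => Q * m0 * (∑ j ∈ Finset.univ.filter (fun j => j ≠ i), X i j t))]
      simp [hICfilter]
    have hsum_ite2 : ∑ i, ∑ j ∈ Finset.univ.filter (fun j => j ≠ i),
          (if j = 0 then Q * m1 * X i j t else 0)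
        = Q * m1 * ∑ i ∈ ICset n, X i 0 t := by
      have inner : ∀ i : Fin (n+1), (∑ j ∈ Finset.univ.filter (fun j => j ≠ i),
            (if j = 0 then Q * m1 * X i j t else 0))
          = if i = 0 then 0 else Q * m1 * X i 0 t := by
        intro i
        rw [Finset.sum_ite_eq' (Finset.univ.filter (fun j => j ≠ i)) (0 : Fin (n+1))
          (fun j => Q * m1 * X i j t)]
        by_cases hi : i = 0
        · simp [hi]
        · simp [hi, Ne.symm hi]
      rw [Finset.sum_congr rfl fun i _ => inner i]
      have e2 : ∀ i : Fin (n+1), (if i = 0 then 0 else Q * m1 * X i 0 t)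
          = if i ≠ 0 then Q * m1 * X i 0 t else 0 := by
        intro i; by_cases hi : i = 0 <;> simp [hi]
      rw [Finset.sum_congr rfl fun i _ => e2 i, ← Finset.sum_filter, ← hICfilter,
        Finset.mul_sum]
    have hdep := hdepot t ht
    have hRHS : ∑ i, ∑ j ∈ Finset.univ.filter (fun j => j ≠ i),
          (Q * (d i j * X i j t)
            - ((if i = 0 then Q * m0 * X i j t else 0)
               + (if j = 0 then Q * m1 * X i j t else 0)))
        = Q * (∑ i, ∑ j ∈ Finset.univ.filter (fun j => j ≠ i), d i j * X i j t)
          - Q * (m0 + m1) * ∑ i ∈ ICset n, X 0 i t := by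
      have expand : ∑ i, ∑ j ∈ Finset.univ.filter (fun j => j ≠ i),
            (Q * (d i j * X i j t)
              - ((if i = 0 then Q * m0 * X i j t else 0)
                 + (if j = 0 then Q * m1 * X i j t else 0)))
          = (∑ i, ∑ j ∈ Finset.univ.filter (fun j => j ≠ i), Q * (d i j * X i j t))
            - ((∑ i, ∑ j ∈ Finset.univ.filter (fun j => j ≠ i),
                  (if i = 0 then Q * m0 * X i j t else 0))
               + (∑ i, ∑ j ∈ Finset.univ.filter (fun j => j ≠ i),
                  (if j = 0 then Q * m1 * X i j t else 0))) := by
        rw [← Finset.sum_add_distrib, ← Finset.sum_sub_distrib]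
        refine Finset.sum_congr rfl fun i _ => ?_
        rw [← Finset.sum_add_distrib, ← Finset.sum_sub_distrib]
      have hQmul : ∑ i, ∑ j ∈ Finset.univ.filter (fun j => j ≠ i), Q * (d i j * X i j t)
          = Q * ∑ i, ∑ j ∈ Finset.univ.filter (fun j => j ≠ i), d i j * X i j t := by
        rw [Finset.mul_sum]
        exact Finset.sum_congr rfl fun i _ => by rw [Finset.mul_sum]
      rw [expand, hQmul, hsum_ite1, hsum_ite2, hdep]
      ring
    -- the flow bound on total collected oil
    have hzero : ∑ i : Fin (n+1),
        ((∑ j ∈ Finset.univ.filter (fun j => j ≠ i), F i j t)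
          - (∑ j ∈ Finset.univ.filter (fun j => j ≠ i), F j i t)) = 0 := by
      have hz := stmt8_sum_pot (fun _ => (1:ℝ)) (fun i j => F i j t)
      simpa using hz.symm
    have hSWval : ∑ i ∈ ICset n, W i t
        = (∑ j ∈ Finset.univ.filter (fun j => j ≠ 0), F j 0 t)
          - ∑ j ∈ Finset.univ.filter (fun j => j ≠ 0), F 0 j t := by
      have e1 : ∑ i ∈ ICset n, W i t
          = ∑ i ∈ ICset n, ((∑ j ∈ Finset.univ.filter (fun j => j ≠ i), F i j t)
              - (∑ j ∈ Finset.univ.filter (fun j => j ≠ i), F j i t)) := by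
        refine Finset.sum_congr rfl fun i hi => ?_
        rw [hflow i ((hmem i).mp hi) t ht]
      rw [e1, ICset, Finset.sum_erase_eq_sub (Finset.mem_univ (0 : Fin (n+1))), hzero]
      ring
    have hSWle : ∑ i ∈ ICset n, W i t ≤ Q * ∑ i ∈ ICset n, X 0 i t := by
      rw [hSWval]
      have h1 : ∑ j ∈ Finset.univ.filter (fun j => j ≠ 0), F j 0 t
          ≤ ∑ j ∈ Finset.univ.filter (fun j => j ≠ 0), Q * X j 0 t := by
        refine Finset.sum_le_sum fun j hj => ?_
        have hj0 : j ≠ 0 := (Finset.mem_filter.mp hj).2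
        have h2 := hFcap j 0 t ht hj0
        rw [ha_depot t, sub_zero] at h2
        exact h2
      have h3 : 0 ≤ ∑ j ∈ Finset.univ.filter (fun j => j ≠ 0), F 0 j t := by
        refine Finset.sum_nonneg fun j hj => ?_
        exact hF_nonneg 0 j t ht (Ne.symm (Finset.mem_filter.mp hj).2)
      have h4 : ∑ j ∈ Finset.univ.filter (fun j => j ≠ 0), Q * X j 0 t
          = Q * ∑ i ∈ ICset n, X 0 i t := by
        rw [← Finset.mul_sum, ← hICfilter, hdep]
      linarith
    -- integrality of the number of routes
    obtain ⟨K, hK⟩ : ∃ K : ℤ, (K : ℝ) = ∑ i ∈ ICset n, X 0 i t := by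
      refine ⟨∑ i ∈ ICset n, if X 0 i t = 1 then 1 else 0, ?_⟩
      push_cast
      refine Finset.sum_congr rfl fun i hi => ?_
      have hi0 : i ≠ 0 := (hmem i).mp hi
      rcases hX_bin 0 i t ht (Ne.symm hi0) with hx | hx <;> rw [hx] <;> norm_num
    have hceil : (⌈(∑ i ∈ ICset n, W i t) / Q⌉ : ℝ) ≤ ∑ i ∈ ICset n, X 0 i t := by
      have hdiv : (∑ i ∈ ICset n, W i t) / Q ≤ (K : ℝ) := by
        rw [div_le_iff₀ hQ, hK]
        nlinarith [hSWle]
      have hle : (⌈(∑ i ∈ ICset n, W i t) / Q⌉ : ℤ) ≤ K := Int.ceil_le.mpr hdiv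
      rw [← hK]
      exact_mod_cast hle
    refine ⟨hceil, ?_⟩
    -- assemble the per-period inequality
    have Hmain : ∑ i ∈ ICset n, (ψ i + φ i) * W i t
        ≤ Q * (∑ i, ∑ j ∈ Finset.univ.filter (fun j => j ≠ i), d i j * X i j t)
          - Q * (m0 + m1) * ∑ i ∈ ICset n, X 0 i t := by
      rw [hcomb, ← hRHS]; exact hptbound
    have hsumdiv : ∑ i ∈ ICset n, (W i t / Q) = (∑ i ∈ ICset n, W i t) / Q :=
      (Finset.sum_div _ _ _).symm
    have hLQ : Q * (∑ i ∈ ICset n, (d 0 i + d i 0) * (W i t / Q))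
        = ∑ i ∈ ICset n, (d 0 i + d i 0) * W i t := by
      rw [Finset.mul_sum]
      refine Finset.sum_congr rfl fun i _ => ?_
      field_simp
    have hdecomp : ∑ i ∈ ICset n, (d 0 i + d i 0) * W i t
        = ∑ i ∈ ICset n, (ψ i + φ i) * W i t + (m0 + m1) * ∑ i ∈ ICset n, W i t := by
      rw [Finset.mul_sum, ← Finset.sum_add_distrib]
      refine Finset.sum_congr rfl fun i hi => ?_
      have hi0 : i ≠ 0 := (hmem i).mp hi
      rw [hψv i hi0, hφv i hi0]
      ring
    have hmm : 0 ≤ (m0 + m1) * Q := mul_nonneg (by linarith) hQ.le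
    have hceil' := mul_le_mul_of_nonneg_left hceil hmm
    have hQSW : Q * ((∑ i ∈ ICset n, W i t) / Q) = ∑ i ∈ ICset n, W i t := by
      field_simp
    have e : Q * ((∑ i ∈ ICset n, (d 0 i + d i 0) * (W i t / Q))
          + (m0 + m1) * ((⌈(∑ i ∈ ICset n, W i t) / Q⌉ : ℝ) - ∑ i ∈ ICset n, (W i t / Q)))
        = (∑ i ∈ ICset n, (ψ i + φ i) * W i t)
          + (m0 + m1) * (Q * (⌈(∑ i ∈ ICset n, W i t) / Q⌉ : ℝ)) := by
      rw [mul_add, hLQ, hdecomp, hsumdiv]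
      field_simp
      ring
    have hceil2 : (m0 + m1) * (Q * (⌈(∑ i ∈ ICset n, W i t) / Q⌉ : ℝ))
        ≤ (m0 + m1) * (Q * ∑ i ∈ ICset n, X 0 i t) :=
      mul_le_mul_of_nonneg_left (mul_le_mul_of_nonneg_left hceil hQ.le)
        (add_nonneg hm0nn hm1nn)
    have hat : Q * (m0 + m1) * (∑ i ∈ ICset n, X 0 i t)
        = (m0 + m1) * (Q * ∑ i ∈ ICset n, X 0 i t) := by ring
    have goalQ : Q * ((∑ i ∈ ICset n, (d 0 i + d i 0) * (W i t / Q))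
          + (m0 + m1) * ((⌈(∑ i ∈ ICset n, W i t) / Q⌉ : ℝ) - ∑ i ∈ ICset n, (W i t / Q)))
        ≤ Q * (∑ i, ∑ j ∈ Finset.univ.filter (fun j => j ≠ i), d i j * X i j t) := by
      rw [e]
      linarith [Hmain, hceil2, hat]
    exact le_of_mul_le_mul_left goalQ hQ
  -- construct V and R
  refine ⟨fun t => ⌈(∑ i ∈ ICset n, W i t) / Q⌉,
    fun t => ((⌈(∑ i ∈ ICset n, W i t) / Q⌉ : ℝ) - ∑ i ∈ ICset n, (W i t / Q)),
    ?_, ?_, ?_, ?_, ?_⟩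
  · intro t ht
    refine Int.ceil_nonneg (div_nonneg ?_ hQ.le)
    exact Finset.sum_nonneg fun i hi => hW_nonneg i ((hmem i).mp hi) t ht
  · intro t ht
    have hsumdiv : ∑ i ∈ ICset n, (W i t / Q) = (∑ i ∈ ICset n, W i t) / Q :=
      (Finset.sum_div _ _ _).symm
    constructor
    · have h2 := Int.le_ceil ((∑ i ∈ ICset n, W i t) / Q)
      linarith [hsumdiv, h2]
    · have h2 := Int.ceil_lt_add_one ((∑ i ∈ ICset n, W i t) / Q)
      linarith [hsumdiv, h2]
  · intro t ht
    ring
  · intro i hi t ht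
    rcases hY_bin i hi t ht with hy | hy
    · have h1 := hWY i hi t ht
      rw [hy, mul_zero] at h1 ⊢
      exact h1
    · rw [hy, mul_one]
      have h2 := hFcap' 0 i hi t ht (Ne.symm hi)
      have h3 := hF_nonneg 0 i t ht (Ne.symm hi)
      linarith
  · have hc1 : ∑ t ∈ Finset.Icc 1 τ,
        ((∑ i ∈ ICset n, (d 0 i + d i 0) * (W i t / Q))
          + (m0 + m1) * ((⌈(∑ i ∈ ICset n, W i t) / Q⌉ : ℝ) - ∑ i ∈ ICset n, (W i t / Q)))
        ≤ ∑ t ∈ Finset.Icc 1 τ,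
            ∑ i, ∑ j ∈ Finset.univ.filter (fun j => j ≠ i), d i j * X i j t :=
      Finset.sum_le_sum fun t ht => (hmain t ht).2
    have hv1 : ∑ t ∈ Finset.Icc 1 τ, ((⌈(∑ i ∈ ICset n, W i t) / Q⌉ : ℝ))
        ≤ ∑ t ∈ Finset.Icc 1 τ, ∑ i ∈ ICset n, X 0 i t :=
      Finset.sum_le_sum fun t ht => (hmain t ht).1
    exact add_le_add (add_le_add (add_le_add
      (mul_le_mul_of_nonneg_left hc1 hc) (mul_le_mul_of_nonneg_left hv1 hv)) le_rfl) le_rfl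
end
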